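/- Let V be a congruence-modular variety of algebras, B ∈ V, and μ, α congruences on B with commutator [μ, α] = ⊥. Then α laxly centralizes μ with respect to V. Specifically, the algebra C = B(μ) = {(b,b') ∈ B × B : b μ b'}, the second-coordinate projection π : C → B, the congruence β = ker π_μ (kernel of the first-coordinate projection), and the congruence γ = Δ_{μ,α} (the kernel of the pushout of the diagonal embedding Δ : B → B(μ) along the natural map B → B/α) witness this: →π β = μ, →π γ = α, and β ∧ γ = ⊥. -/
import Mathlib


/-!
Basic universal algebra: signatures, algebras, homomorphisms, congruences
(forming a complete lattice), generated congruences, images and preimages of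
congruences, quotient algebras, subalgebras, products, ultraproducts,
varieties (classes closed under H, S, P), the term-condition commutator,
relatively free algebras, and lax centrality.
-/

universe u v

namespace UAlg

/-- A (finitary) signature: a type of operation symbols with arities. -/
structure Signature : Type (u + 1) where
  ops : Type u
  arity : ops → ℕ

/-- An algebra of signature `S`. -/
structure Algebra (S : Signature.{u}) : Type (u + 1) where
  carrier : Type u
  interp : ∀ o : S.ops, (Fin (S.arity o) → carrier) → carrier

variable {S : Signature.{u}}

/-- A homomorphism of algebras. -/
structure Hom (A B : Algebra S) : Type u where
  toFun : A.carrier → B.carrier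
  map_interp : ∀ (o : S.ops) (a : Fin (S.arity o) → A.carrier),
    toFun (A.interp o a) = B.interp o (fun i => toFun (a i))

/-- Composition of homomorphisms. -/
def Hom.comp {A B C : Algebra S} (g : Hom B C) (f : Hom A B) : Hom A C where
  toFun := g.toFun ∘ f.toFun
  map_interp o a := by
    simp only [Function.comp, f.map_interp, g.map_interp]

/-- A congruence on an algebra: an equivalence relation compatible with the
operations. -/
structure Cong (A : Algebra S) : Type u where
  r : A.carrier → A.carrier → Prop
  iseqv : Equivalence r
  compat : ∀ (o : S.ops) (a b : Fin (S.arity o) → A.carrier),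
    (∀ i, r (a i) (b i)) → r (A.interp o a) (A.interp o b)

namespace Cong

variable {A : Algebra S}

theorem ext {c d : Cong A} (h : ∀ x y, c.r x y ↔ d.r x y) : c = d := by
  cases c; cases d
  simp only [mk.injEq]
  funext x y
  exact propext (h x y)

instance : PartialOrder (Cong A) where
  le c d := ∀ x y, c.r x y → d.r x y
  le_refl c := fun _ _ h => h
  le_trans a b c hab hbc := fun x y h => hbc x y (hab x y h)
  le_antisymm a b h1 h2 := ext fun x y => ⟨h1 x y, h2 x y⟩

instance : InfSet (Cong A) where
  sInf s :=
    { r := fun x y => ∀ c ∈ s, c.r x y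
      iseqv :=
        ⟨fun x c _ => c.iseqv.refl x,
         fun h c hc => c.iseqv.symm (h c hc),
         fun h1 h2 c hc => c.iseqv.trans (h1 c hc) (h2 c hc)⟩
      compat := fun o a b h c hc => c.compat o a b fun i => h i c hc }

instance : CompleteLattice (Cong A) :=
  completeLatticeOfInf _ (fun s =>
    ⟨fun c hc x y h => h c hc, fun _ hd x y h c hc => hd hc x y h⟩)

end Cong

/-- The congruence generated by a binary relation. -/
def conGen (A : Algebra S) (s : A.carrier → A.carrier → Prop) : Cong A :=
  sInf {c : Cong A | ∀ x y, s x y → c.r x y}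

/-- The kernel congruence of a homomorphism. -/
def Hom.ker {A B : Algebra S} (f : Hom A B) : Cong A where
  r x y := f.toFun x = f.toFun y
  iseqv := ⟨fun _ => rfl, Eq.symm, Eq.trans⟩
  compat o a b h := by
    show f.toFun (A.interp o a) = f.toFun (A.interp o b)
    rw [f.map_interp, f.map_interp]
    exact congrArg _ (funext h)

/-- `conMap f α` (written `→f α` in the paper) is the congruence of `B`
generated by the image `f(α)` of the congruence `α` of `A`. -/
def conMap {A B : Algebra S} (f : Hom A B) (α : Cong A) : Cong B :=
  conGen B (fun x y => ∃ a a', α.r a a' ∧ f.toFun a = x ∧ f.toFun a' = y)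

/-- The inverse image `f⁻¹(β)` of a congruence. -/
def conComap {A B : Algebra S} (f : Hom A B) (β : Cong B) : Cong A where
  r x y := β.r (f.toFun x) (f.toFun y)
  iseqv :=
    ⟨fun _ => β.iseqv.refl _, fun h => β.iseqv.symm h,
     fun h1 h2 => β.iseqv.trans h1 h2⟩
  compat o a b h := by
    show β.r (f.toFun (A.interp o a)) (f.toFun (A.interp o b))
    rw [f.map_interp, f.map_interp]
    exact β.compat o _ _ h

/-- The setoid underlying a congruence. -/
def Cong.toSetoid {A : Algebra S} (c : Cong A) : Setoid A.carrier :=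
  ⟨c.r, c.iseqv⟩

/-- The quotient algebra of an algebra by a congruence. -/
noncomputable def quotAlg (A : Algebra S) (c : Cong A) : Algebra S where
  carrier := Quotient c.toSetoid
  interp o a := Quotient.mk c.toSetoid (A.interp o (fun i => (a i).out))

/-- The natural (quotient) homomorphism `A → A/c`. -/
def natHom (A : Algebra S) (c : Cong A) : Hom A (quotAlg A c) where
  toFun := Quotient.mk c.toSetoid
  map_interp o a := by
    apply Quotient.sound
    apply c.compat
    intro i
    show c.r (a i) (Quotient.mk c.toSetoid (a i)).out
    exact Quotient.exact ((Quotient.out_eq (Quotient.mk c.toSetoid (a i))).symm)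

/-- A subuniverse: a subset closed under the operations. -/
structure Subuniverse (A : Algebra S) : Type u where
  carrier : Set A.carrier
  closed : ∀ (o : S.ops) (a : Fin (S.arity o) → A.carrier),
    (∀ i, a i ∈ carrier) → A.interp o a ∈ carrier

/-- The subalgebra determined by a subuniverse. -/
def Subuniverse.alg {A : Algebra S} (s : Subuniverse A) : Algebra S where
  carrier := {x // x ∈ s.carrier}
  interp o a := ⟨A.interp o (fun i => (a i).1), s.closed o _ (fun i => (a i).2)⟩

/-- The product of a family of algebras. -/
def prodAlg {ι : Type u} (A : ι → Algebra S) : Algebra S where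
  carrier := ∀ i, (A i).carrier
  interp o a i := (A i).interp o (fun j => a j i)

/-- A variety: a class of algebras closed under homomorphic images,
subalgebras, and products. -/
structure IsVariety (V : Algebra S → Prop) : Prop where
  closed_hom : ∀ (A B : Algebra S) (f : Hom A B),
    Function.Surjective f.toFun → V A → V B
  closed_sub : ∀ (A : Algebra S) (s : Subuniverse A), V A → V s.alg
  closed_prod : ∀ (ι : Type u) (A : ι → Algebra S), (∀ i, V (A i)) → V (prodAlg A)

/-- `α` laxly centralizes `μ` with respect to the class `V`. -/
def LaxCentralizes (V : Algebra S → Prop) (B : Algebra S) (μ α : Cong B) : Prop :=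
  ∃ C : Algebra S, V C ∧ ∃ (π : Hom C B) (β γ : Cong C),
    Function.Surjective π.toFun ∧ μ ≤ conMap π β ∧ α ≤ conMap π γ ∧ β ⊓ γ = ⊥

/-- `B` is a homomorphic image of a member of `K`. -/
def InH (K : Algebra S → Prop) (B : Algebra S) : Prop :=
  ∃ A, K A ∧ ∃ f : Hom A B, Function.Surjective f.toFun

/-- `B` embeds into a product of members of `K`, i.e. `B ∈ SP(K)`. -/
def InSP (K : Algebra S → Prop) (B : Algebra S) : Prop :=
  ∃ (ι : Type u) (A : ι → Algebra S), (∀ i, K (A i)) ∧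
    ∃ f : Hom B (prodAlg A), Function.Injective f.toFun

/-- `B ∈ HSP(K)`: `B` is a homomorphic image of an algebra embeddable in a
product of members of `K`. -/
def InHSP (K : Algebra S → Prop) (B : Algebra S) : Prop :=
  ∃ C : Algebra S, InSP K C ∧ ∃ f : Hom C B, Function.Surjective f.toFun

/-- The congruence on a product given by an ultrafilter on the index set. -/
def ultraCong {ι : Type u} (A : ι → Algebra S) (U : Ultrafilter ι) :
    Cong (prodAlg A) where
  r x y := {i | x i = y i} ∈ U
  iseqv := by
    refine ⟨fun x => ?_, fun {x y} h => ?_, fun {x y z} h1 h2 => ?_⟩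
    · have : {i | x i = x i} = Set.univ := by ext i; simp
      rw [this]; exact Filter.univ_mem
    · have : {i | y i = x i} = {i | x i = y i} := by ext i; exact eq_comm
      rw [this]; exact h
    · refine Filter.mem_of_superset (Filter.inter_mem h1 h2) ?_
      intro i hi
      exact hi.1.trans hi.2
  compat o a b h := by
    have h1 : (⋂ j, {i | a j i = b j i}) ∈ (U : Filter ι) :=
      (Filter.iInter_mem).2 h
    refine Filter.mem_of_superset h1 ?_
    intro i hi
    simp only [Set.mem_iInter, Set.mem_setOf_eq] at hi
    show (A i).interp o (fun j => a j i) = (A i).interp o (fun j => b j i)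
    exact congrArg _ (funext hi)

/-- `B ∈ HSP_u(K)`: `B` is a homomorphic image of an algebra embeddable in an
ultraproduct of members of `K`. -/
def InHSPu (K : Algebra S → Prop) (B : Algebra S) : Prop :=
  ∃ (ι : Type u) (A : ι → Algebra S) (U : Ultrafilter ι), (∀ i, K (A i)) ∧
    ∃ C : Algebra S,
      (∃ g : Hom C (quotAlg (prodAlg A) (ultraCong A U)),
        Function.Injective g.toFun) ∧
      ∃ f : Hom C B, Function.Surjective f.toFun

/-- `μ` is the monolith of `B`: the minimum nontrivial congruence.
In particular its existence means `B` is subdirectly irreducible. -/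
def IsMonolith (B : Algebra S) (μ : Cong B) : Prop :=
  μ ≠ ⊥ ∧ ∀ θ : Cong B, θ ≠ ⊥ → μ ≤ θ

/-- Terms of signature `S` over a set `X` of variables. -/
inductive Tm (S : Signature.{u}) (X : Type v) : Type max u v where
  | var : X → Tm S X
  | app : (o : S.ops) → (Fin (S.arity o) → Tm S X) → Tm S X

/-- Evaluation of a term in an algebra under an assignment of the variables. -/
def Tm.eval {X : Type v} (A : Algebra S) (v : X → A.carrier) :
    Tm S X → A.carrier
  | .var x => v x
  | .app o t => A.interp o (fun i => Tm.eval A v (t i))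

/-- The (term-condition) centralizing relation `C(α, β; δ)`. -/
def Centralizes {A : Algebra S} (α β δ : Cong A) : Prop :=
  ∀ (n : ℕ) (t : Tm S (Unit ⊕ Fin n)) (a b : A.carrier)
    (c d : Fin n → A.carrier),
    α.r a b → (∀ i, β.r (c i) (d i)) →
    δ.r (t.eval A (Sum.elim (fun _ => a) c)) (t.eval A (Sum.elim (fun _ => a) d)) →
    δ.r (t.eval A (Sum.elim (fun _ => b) c)) (t.eval A (Sum.elim (fun _ => b) d))

/-- The commutator `[α, β]`: the least congruence `δ` such that `α`
centralizes `β` modulo `δ` (the Freese–McKenzie commutator, which is the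
modular commutator in congruence-modular varieties). -/
def commutator {A : Algebra S} (α β : Cong A) : Cong A :=
  sInf {δ : Cong A | Centralizes α β δ}

/-- The term algebra over a set of variables. -/
def termAlg (S : Signature.{u}) (X : Type u) : Algebra S :=
  ⟨Tm S X, Tm.app⟩

/-- The congruence of `V`-equations on the term algebra: two terms are related
iff they evaluate the same way in every member of `V`. -/
def eqThy (V : Algebra S → Prop) (X : Type u) : Cong (termAlg S X) where
  r s t := ∀ A : Algebra S, V A → ∀ v : X → A.carrier, s.eval A v = t.eval A v
  iseqv :=
    ⟨fun _ _ _ _ => rfl, fun h A hA v => (h A hA v).symm,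
     fun h1 h2 A hA v => (h1 A hA v).trans (h2 A hA v)⟩
  compat o a b h A hA v := by
    show Tm.eval A v (Tm.app o a) = Tm.eval A v (Tm.app o b)
    simp only [Tm.eval]
    exact congrArg _ (funext fun i => h i A hA v)

/-- The relatively free algebra of `V` on the set `X` of generators. -/
noncomputable def freeAlg (V : Algebra S → Prop) (X : Type u) : Algebra S :=
  quotAlg (termAlg S X) (eqThy V X)

/-- The canonical generators of the relatively free algebra. -/
def freeGen (V : Algebra S → Prop) (X : Type u) (x : X) :
    (freeAlg V X).carrier :=
  Quotient.mk (eqThy V X).toSetoid (Tm.var x)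

/-- The homomorphism from the relatively free algebra of `V` to an algebra
`B ∈ V` induced by an assignment of the generators. -/
def evalFreeHom (V : Algebra S → Prop) (X : Type u) (B : Algebra S)
    (hB : V B) (v : X → B.carrier) : Hom (freeAlg V X) B where
  toFun := Quotient.lift (fun t : Tm S X => t.eval B v) (fun s t h => h B hB v)
  map_interp o a := by
    show Tm.eval B v (Tm.app o (fun i => (a i).out)) = _
    simp only [Tm.eval]
    congr 1
    funext i
    conv_rhs => rw [← Quotient.out_eq (a i)]
    rfl


/-- `B(μ)`: the subalgebra of `B × B` consisting of the pairs related by `μ`. -/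
def pairAlg (B : Algebra S) (μ : Cong B) : Algebra S where
  carrier := {p : B.carrier × B.carrier // μ.r p.1 p.2}
  interp o a :=
    ⟨(B.interp o (fun i => (a i).1.1), B.interp o (fun i => (a i).1.2)),
      μ.compat o _ _ (fun i => (a i).2)⟩

/-- The first-coordinate projection `π_μ : B(μ) → B`. -/
def fstProj (B : Algebra S) (μ : Cong B) : Hom (pairAlg B μ) B :=
  ⟨fun p => p.1.1, fun _ _ => rfl⟩

/-- The second-coordinate projection `π : B(μ) → B`. -/
def sndProj (B : Algebra S) (μ : Cong B) : Hom (pairAlg B μ) B :=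
  ⟨fun p => p.1.2, fun _ _ => rfl⟩

/-- `Δ_{μ,α}`: the congruence on `B(μ)` generated by the pairs
`⟨(b, b), (b', b')⟩` with `b α b'`; equivalently, the kernel of the pushout of
the diagonal embedding `Δ : B → B(μ)` along the natural map `B → B/α`. -/
def deltaCong (B : Algebra S) (μ α : Cong B) : Cong (pairAlg B μ) :=
  conGen (pairAlg B μ) (fun p q =>
    p.1.1 = p.1.2 ∧ q.1.1 = q.1.2 ∧ α.r p.1.1 q.1.1)


/-! ### Auxiliary development for Statement 6 -/

section Basic

/-- The equality congruence. -/
def eqCong (A : Algebra S) : Cong A where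
  r x y := x = y
  iseqv := ⟨fun _ => rfl, Eq.symm, Eq.trans⟩
  compat _ _ _ h := congrArg _ (funext h)

theorem Cong.r_of_eq {A : Algebra S} (c : Cong A) {x y : A.carrier} (h : x = y) : c.r x y :=
  h ▸ c.iseqv.refl x

theorem Cong.bot_r {A : Algebra S} {x y : A.carrier} (h : (⊥ : Cong A).r x y) : x = y :=
  (bot_le : (⊥ : Cong A) ≤ eqCong A) x y h

theorem Cong.inf_r_iff {A : Algebra S} {c d : Cong A} {x y : A.carrier} :
    (c ⊓ d).r x y ↔ c.r x y ∧ d.r x y := by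
  constructor
  · intro h
    exact ⟨(inf_le_left : c ⊓ d ≤ c) x y h, (inf_le_right : c ⊓ d ≤ d) x y h⟩
  · intro h
    let e : Cong A :=
      { r := fun x y => c.r x y ∧ d.r x y
        iseqv := ⟨fun x => ⟨c.iseqv.refl x, d.iseqv.refl x⟩,
          fun h => ⟨c.iseqv.symm h.1, d.iseqv.symm h.2⟩,
          fun h1 h2 => ⟨c.iseqv.trans h1.1 h2.1, d.iseqv.trans h1.2 h2.2⟩⟩
        compat := fun o a b h =>
          ⟨c.compat o a b fun i => (h i).1, d.compat o a b fun i => (h i).2⟩ }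
    exact (le_inf (show e ≤ c from fun _ _ h => h.1)
      (show e ≤ d from fun _ _ h => h.2) : e ≤ c ⊓ d) x y h

theorem conGen_le {A : Algebra S} {s : A.carrier → A.carrier → Prop} {c : Cong A}
    (h : ∀ x y, s x y → c.r x y) : conGen A s ≤ c :=
  sInf_le h

theorem conGen_of {A : Algebra S} {s : A.carrier → A.carrier → Prop} {x y : A.carrier}
    (h : s x y) : (conGen A s).r x y :=
  fun _ hc => hc x y h

end Basic

section Terms

/-- Renaming of variables in a term. -/
def Tm.rename {X Y : Type v} (f : X → Y) : Tm S X → Tm S Y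
  | .var x => .var (f x)
  | .app o t => .app o (fun i => (t i).rename f)

theorem Tm.eval_rename {X Y : Type v} (f : X → Y) (A : Algebra S) (v : Y → A.carrier) :
    ∀ t : Tm S X, (t.rename f).eval A v = t.eval A (fun x => v (f x))
  | .var _ => rfl
  | .app o t => by
    show A.interp o _ = A.interp o _
    exact congrArg _ (funext fun i => Tm.eval_rename f A v (t i))

theorem Hom.eval_comm {A B : Algebra S} (f : Hom A B) {X : Type v} (v : X → A.carrier) :
    ∀ t : Tm S X, f.toFun (t.eval A v) = t.eval B (fun x => f.toFun (v x))
  | .var _ => rfl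
  | .app o t => by
    show f.toFun (A.interp o _) = B.interp o _
    rw [f.map_interp]
    exact congrArg _ (funext fun i => Hom.eval_comm f v (t i))

theorem Cong.eval_congr {A : Algebra S} (c : Cong A) {X : Type v} {v w : X → A.carrier}
    (h : ∀ x, c.r (v x) (w x)) : ∀ t : Tm S X, c.r (t.eval A v) (t.eval A w)
  | .var x => h x
  | .app o t => c.compat o _ _ fun i => Cong.eval_congr c h (t i)

end Terms

section Cent

theorem centralizes_commutator {A : Algebra S} (μ α : Cong A) :
    Centralizes μ α (commutator μ α) := by
  intro n t a b c d hab hcd hδ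
  intro δ hδmem
  exact hδmem n t a b c d hab hcd (hδ δ hδmem)

theorem cent_bot {A : Algebra S} {μ α : Cong A} (h : commutator μ α = ⊥) :
    ∀ (n : ℕ) (t : Tm S (Unit ⊕ Fin n)) (a b : A.carrier) (c d : Fin n → A.carrier),
      μ.r a b → (∀ i, α.r (c i) (d i)) →
      t.eval A (Sum.elim (fun _ => a) c) = t.eval A (Sum.elim (fun _ => a) d) →
      t.eval A (Sum.elim (fun _ => b) c) = t.eval A (Sum.elim (fun _ => b) d) := by
  intro n t a b c d hab hcd heq
  have h2 := centralizes_commutator μ α n t a b c d hab hcd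
    (by rw [h]; exact (⊥ : Cong A).r_of_eq heq)
  rw [h] at h2
  exact Cong.bot_r h2

/-- The term condition with several `μ`-pairs and several `α`-pairs. -/
theorem cent_multi {A : Algebra S} {μ α : Cong A} (h : commutator μ α = ⊥)
    {n : ℕ} (t : Tm S (Fin n)) (f g f' g' : Fin n → A.carrier)
    (hl : ∀ l, (f l = g l ∧ f' l = g' l ∧ μ.r (f l) (f' l)) ∨
               (f l = f' l ∧ g l = g' l ∧ α.r (f l) (g l)))
    (heq : t.eval A f = t.eval A g) : t.eval A f' = t.eval A g' := by
  have main : ∀ L : List (Fin n),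
      t.eval A (fun l => if l ∈ L then f' l else f l)
        = t.eval A (fun l => if l ∈ L then g' l else g l) := by
    intro L
    induction L with
    | nil => simpa using heq
    | cons j L ih =>
      by_cases hjL : j ∈ L
      · have e1 : (fun l => if l ∈ j :: L then f' l else f l)
            = (fun l => if l ∈ L then f' l else f l) := by
          funext l
          by_cases hl' : l ∈ L
          · simp [hl', List.mem_cons]
          · have h2 : ¬ l ∈ j :: L := by
              simp only [List.mem_cons, not_or]
              exact ⟨fun hh => hl' (hh ▸ hjL), hl'⟩
            simp [hl', h2]
        have e2 : (fun l => if l ∈ j :: L then g' l else g l)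
            = (fun l => if l ∈ L then g' l else g l) := by
          funext l
          by_cases hl' : l ∈ L
          · simp [hl', List.mem_cons]
          · have h2 : ¬ l ∈ j :: L := by
              simp only [List.mem_cons, not_or]
              exact ⟨fun hh => hl' (hh ▸ hjL), hl'⟩
            simp [hl', h2]
        rw [e1, e2]; exact ih
      · rcases hl j with ⟨hfg, hfg', hμ⟩ | ⟨hff, hgg, _⟩
        · -- a genuine μ-position: apply the term condition
          have hcd : ∀ l, α.r ((fun l => if l ∈ L then f' l else f l) l)
              ((fun l => if l ∈ L then g' l else g l) l) := by
            intro l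
            by_cases hl' : l ∈ L <;> rcases hl l with ⟨h1, h2, _⟩ | ⟨h1, h2, h3⟩ <;>
              simp only [if_pos, if_neg, hl', if_true, if_false]
            · exact α.r_of_eq h2
            · exact h1 ▸ h2 ▸ h3
            · exact α.r_of_eq h1
            · exact h3
          have key := cent_bot h n
            (t.rename (fun l => if l = j then Sum.inl () else Sum.inr l))
            (f j) (f' j)
            (fun l => if l ∈ L then f' l else f l)
            (fun l => if l ∈ L then g' l else g l) hμ hcd
          rw [Tm.eval_rename, Tm.eval_rename, Tm.eval_rename, Tm.eval_rename] at key
          have efc : (fun x => Sum.elim (fun _ => f j)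
              (fun l => if l ∈ L then f' l else f l) (if x = j then Sum.inl () else Sum.inr x))
              = (fun l => if l ∈ L then f' l else f l) := by
            funext x
            by_cases hx : x = j
            · subst hx; simp [if_neg hjL]
            · simp [hx]
          have efd : (fun x => Sum.elim (fun _ => f j)
              (fun l => if l ∈ L then g' l else g l) (if x = j then Sum.inl () else Sum.inr x))
              = (fun l => if l ∈ L then g' l else g l) := by
            funext x
            by_cases hx : x = j
            · subst hx; simp [if_neg hjL, hfg]
            · simp [hx]
          have efc' : (fun x => Sum.elim (fun _ => f' j)
              (fun l => if l ∈ L then f' l else f l) (if x = j then Sum.inl () else Sum.inr x))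
              = (fun l => if l ∈ j :: L then f' l else f l) := by
            funext x
            by_cases hx : x = j
            · subst hx; simp
            · simp only [if_neg hx, Sum.elim_inr, List.mem_cons]
              by_cases hx2 : x ∈ L
              · simp [hx2]
              · simp [hx, hx2]
          have efd' : (fun x => Sum.elim (fun _ => f' j)
              (fun l => if l ∈ L then g' l else g l) (if x = j then Sum.inl () else Sum.inr x))
              = (fun l => if l ∈ j :: L then g' l else g l) := by
            funext x
            by_cases hx : x = j
            · subst hx; simp [hfg']
            · simp only [if_neg hx, Sum.elim_inr, List.mem_cons]
              by_cases hx2 : x ∈ L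
              · simp [hx2]
              · simp [hx, hx2]
          rw [efc, efd, efc', efd'] at key
          exact key ih
        · -- an α-position: nothing changes
          have e1 : (fun l => if l ∈ j :: L then f' l else f l)
              = (fun l => if l ∈ L then f' l else f l) := by
            funext l
            by_cases hl' : l ∈ L
            · simp [hl', List.mem_cons]
            · by_cases hlj : l = j
              · subst hlj; simp [if_neg hl', hff]
              · have h2 : ¬ l ∈ j :: L := by
                  simp only [List.mem_cons, not_or]; exact ⟨hlj, hl'⟩
                simp [hl', h2]
          have e2 : (fun l => if l ∈ j :: L then g' l else g l)
              = (fun l => if l ∈ L then g' l else g l) := by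
            funext l
            by_cases hl' : l ∈ L
            · simp [hl', List.mem_cons]
            · by_cases hlj : l = j
              · subst hlj; simp [if_neg hl', hgg]
              · have h2 : ¬ l ∈ j :: L := by
                  simp only [List.mem_cons, not_or]; exact ⟨hlj, hl'⟩
                simp [hl', h2]
          rw [e1, e2]; exact ih
  have hfin := main (List.finRange n)
  have e1 : (fun l => if l ∈ List.finRange n then f' l else f l) = f' := by
    funext l; simp [List.mem_finRange]
  have e2 : (fun l => if l ∈ List.finRange n then g' l else g l) = g' := by
    funext l; simp [List.mem_finRange]
  rwa [e1, e2] at hfin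

end Cent

section Chains

/-- Mal'cev chains: the congruence generated by a relation, described via
polynomial translations of generating pairs. -/
inductive ConChain (A : Algebra S) (s : A.carrier → A.carrier → Prop) :
    A.carrier → A.carrier → Prop
  | step (n : ℕ) (t : Tm S (Fin n)) (v v' : Fin n → A.carrier)
      (h : ∀ l, v l = v' l ∨ s (v l) (v' l)) :
      ConChain A s (t.eval A v) (t.eval A v')
  | symm {a b : A.carrier} : ConChain A s a b → ConChain A s b a
  | trans {a b c : A.carrier} : ConChain A s a b → ConChain A s b c → ConChain A s a c

theorem ConChain.refl' (A : Algebra S) (s : A.carrier → A.carrier → Prop) (x : A.carrier) :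
    ConChain A s x x :=
  ConChain.step 1 (Tm.var 0) (fun _ => x) (fun _ => x) (fun _ => Or.inl rfl)

theorem ConChain.update {A : Algebra S} {s : A.carrier → A.carrier → Prop}
    {x y : A.carrier} (hxy : ConChain A s x y) (o : S.ops)
    (u : Fin (S.arity o) → A.carrier) (j : Fin (S.arity o)) :
    ConChain A s (A.interp o (Function.update u j x)) (A.interp o (Function.update u j y)) := by
  induction hxy with
  | step n t v v' hmv =>
    have hVV' : ∀ m : Fin (S.arity o + n),
        (fun m => Sum.elim u v (finSumFinEquiv.symm m)) m
          = (fun m => Sum.elim u v' (finSumFinEquiv.symm m)) m ∨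
        s ((fun m => Sum.elim u v (finSumFinEquiv.symm m)) m)
          ((fun m => Sum.elim u v' (finSumFinEquiv.symm m)) m) := by
      intro m
      rcases hm : finSumFinEquiv.symm m with i | l
      · left; simp [hm]
      · simpa [hm] using hmv l
    have key := ConChain.step (A := A) (s := s) _
      (Tm.app o (fun i => if i = j then (t.rename (fun l => finSumFinEquiv (Sum.inr l)))
        else Tm.var (finSumFinEquiv (Sum.inl i))))
      _ _ hVV'
    have eT : ∀ (vv : Fin n → A.carrier),
        (Tm.app o (fun i => if i = j then (t.rename (fun l => finSumFinEquiv (Sum.inr l)))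
          else Tm.var (finSumFinEquiv (Sum.inl i)))).eval A
            (fun m => Sum.elim u vv (finSumFinEquiv.symm m))
        = A.interp o (Function.update u j (t.eval A vv)) := by
      intro vv
      show A.interp o _ = A.interp o _
      apply congrArg; funext i
      dsimp only
      by_cases hij : i = j
      · subst hij
        rw [if_pos rfl, Tm.eval_rename, Function.update_self]
        exact congrArg (fun w => Tm.eval A w t) (funext fun l => by simp)
      · rw [if_neg hij]
        show Sum.elim u vv (finSumFinEquiv.symm (finSumFinEquiv (Sum.inl i)))
          = Function.update u j (t.eval A vv) i
        rw [Equiv.symm_apply_apply, Function.update_of_ne hij]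
        rfl
    rw [eT v, eT v'] at key
    exact key
  | symm _ ih => exact ConChain.symm ih
  | trans _ _ ih1 ih2 => exact ConChain.trans ih1 ih2

theorem ConChain.interp_compat {A : Algebra S} {s : A.carrier → A.carrier → Prop} (o : S.ops)
    (a b : Fin (S.arity o) → A.carrier) (h : ∀ i, ConChain A s (a i) (b i)) :
    ConChain A s (A.interp o a) (A.interp o b) := by
  have H : ∀ k : ℕ, ConChain A s (A.interp o a)
      (A.interp o (fun i => if i.val < k then b i else a i)) := by
    intro k
    induction k with
    | zero =>
      have e : (fun i => if i.val < 0 then b i else a i) = a := by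
        funext i; simp
      rw [e]; exact ConChain.refl' A s _
    | succ k ih =>
      by_cases hk : k < S.arity o
      · have e1 : (fun i => if i.val < k then b i else a i)
            = Function.update (fun i => if i.val < k then b i else a i) ⟨k, hk⟩
              (a ⟨k, hk⟩) := by
          rw [show a ⟨k, hk⟩ = (fun i => if i.val < k then b i else a i) ⟨k, hk⟩ by simp]
          exact (Function.update_eq_self _ _).symm
        have e2 : (fun i => if i.val < k + 1 then b i else a i)
            = Function.update (fun i => if i.val < k then b i else a i) ⟨k, hk⟩ (b ⟨k, hk⟩) := by
          funext i
          rcases eq_or_ne i ⟨k, hk⟩ with rfl | hij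
          · simp
          · rw [Function.update_of_ne hij]
            have hij' : i.val ≠ k := fun hh => hij (Fin.ext hh)
            by_cases h1 : i.val < k
            · rw [if_pos h1, if_pos (Nat.lt_succ_of_lt h1)]
            · rw [if_neg h1, if_neg (by omega)]
        have step := ConChain.update (h ⟨k, hk⟩) o
          (fun i => if i.val < k then b i else a i) ⟨k, hk⟩
        rw [← e1, ← e2] at step
        exact ConChain.trans ih step
      · have e : (fun i => if i.val < k + 1 then b i else a i)
            = (fun i => if i.val < k then b i else a i) := by
          funext i
          have hi : i.val < k := lt_of_lt_of_le i.isLt (le_of_not_gt hk)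
          rw [if_pos hi, if_pos (Nat.lt_succ_of_lt hi)]
        rw [e]; exact ih
  have hfin := H (S.arity o)
  have e : (fun i => if i.val < S.arity o then b i else a i) = b := by
    funext i; rw [if_pos i.isLt]
  rwa [e] at hfin

/-- Mal'cev chains form a congruence. -/
def chainCong (A : Algebra S) (s : A.carrier → A.carrier → Prop) : Cong A where
  r := ConChain A s
  iseqv := ⟨ConChain.refl' A s, ConChain.symm, ConChain.trans⟩
  compat := ConChain.interp_compat

theorem conGen_le_chain (A : Algebra S) (s : A.carrier → A.carrier → Prop) :
    conGen A s ≤ chainCong A s :=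
  conGen_le fun x y hxy =>
    ConChain.step 1 (Tm.var 0) (fun _ => x) (fun _ => y) (fun _ => Or.inr hxy)

end Chains

section PairAlg

variable {B : Algebra S}

theorem pair_fst_eval (θ : Cong B) {X : Type v} (t : Tm S X)
    (w : X → (pairAlg B θ).carrier) :
    (t.eval (pairAlg B θ) w).1.1 = t.eval B (fun l => (w l).1.1) :=
  Hom.eval_comm (fstProj B θ) w t

theorem pair_snd_eval (θ : Cong B) {X : Type v} (t : Tm S X)
    (w : X → (pairAlg B θ).carrier) :
    (t.eval (pairAlg B θ) w).1.2 = t.eval B (fun l => (w l).1.2) :=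
  Hom.eval_comm (sndProj B θ) w t

theorem ker_fst_inf_ker_snd (θ : Cong B) :
    (fstProj B θ).ker ⊓ (sndProj B θ).ker = (⊥ : Cong (pairAlg B θ)) := by
  apply le_antisymm _ bot_le
  intro p q hpq
  obtain ⟨h1, h2⟩ := Cong.inf_r_iff.1 hpq
  exact (⊥ : Cong (pairAlg B θ)).r_of_eq (Subtype.ext (Prod.ext_iff.2 ⟨h1, h2⟩))

theorem V_pairAlg {V : Algebra S → Prop} (hV : IsVariety V) (hB : V B) (θ : Cong B) :
    V (pairAlg B θ) := by
  have h1 : V (prodAlg (fun _ : ULift.{u} Bool => B)) :=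
    hV.closed_prod (ULift.{u} Bool) _ (fun _ => hB)
  let su : Subuniverse (prodAlg (fun _ : ULift.{u} Bool => B)) :=
    { carrier := {f | θ.r (f ⟨false⟩) (f ⟨true⟩)}
      closed := fun o a ha => θ.compat o _ _ (fun i => ha i) }
  have h2 : V su.alg := hV.closed_sub _ _ h1
  let φ : Hom su.alg (pairAlg B θ) :=
    { toFun := fun f => ⟨(f.1 ⟨false⟩, f.1 ⟨true⟩), f.2⟩
      map_interp := fun o a => rfl }
  refine hV.closed_hom _ _ φ ?_ h2
  rintro ⟨⟨b₁, b₂⟩, hb⟩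
  refine ⟨⟨fun i => if i.down then b₂ else b₁, ?_⟩, ?_⟩
  · exact hb
  · apply Subtype.ext
    rfl

/-- The shifting-lemma transport: the witness in the first coordinate of a
pair related with fixed first coordinate can be replaced arbitrarily. -/
theorem shift_fst {θ : Cong B}
    (hMod : IsModularLattice (Cong (pairAlg B θ)))
    (Ψ : Cong (pairAlg B θ)) {x u y z : B.carrier}
    (hxy : θ.r x y) (hxz : θ.r x z) (huy : θ.r u y) (huz : θ.r u z)
    (hΨ : Ψ.r ⟨(x, y), hxy⟩ ⟨(x, z), hxz⟩) :
    Ψ.r ⟨(u, y), huy⟩ ⟨(u, z), huz⟩ := by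
  haveI := hMod
  set η₀ := (fstProj B θ).ker with hη₀
  set η₁ := (sndProj B θ).ker with hη₁
  have hcd : (Ψ ⊓ η₀).r ⟨(x, y), hxy⟩ ⟨(x, z), hxz⟩ := Cong.inf_r_iff.2 ⟨hΨ, rfl⟩
  have e1 : ((Ψ ⊓ η₀) ⊔ η₁).r ⟨(u, y), huy⟩ ⟨(x, y), hxy⟩ :=
    (le_sup_right : η₁ ≤ (Ψ ⊓ η₀) ⊔ η₁) _ _ rfl
  have e2 : ((Ψ ⊓ η₀) ⊔ η₁).r ⟨(x, y), hxy⟩ ⟨(x, z), hxz⟩ :=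
    (le_sup_left : Ψ ⊓ η₀ ≤ (Ψ ⊓ η₀) ⊔ η₁) _ _ hcd
  have e3 : ((Ψ ⊓ η₀) ⊔ η₁).r ⟨(x, z), hxz⟩ ⟨(u, z), huz⟩ :=
    (le_sup_right : η₁ ≤ (Ψ ⊓ η₀) ⊔ η₁) _ _ rfl
  have h1 : ((Ψ ⊓ η₀) ⊔ η₁).r ⟨(u, y), huy⟩ ⟨(u, z), huz⟩ :=
    ((Ψ ⊓ η₀) ⊔ η₁).iseqv.trans (((Ψ ⊓ η₀) ⊔ η₁).iseqv.trans e1 e2) e3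
  have h2 : (((Ψ ⊓ η₀) ⊔ η₁) ⊓ η₀).r ⟨(u, y), huy⟩ ⟨(u, z), huz⟩ :=
    Cong.inf_r_iff.2 ⟨h1, rfl⟩
  have hml : ((Ψ ⊓ η₀) ⊔ η₁) ⊓ η₀ = (Ψ ⊓ η₀) ⊔ (η₁ ⊓ η₀) :=
    sup_inf_assoc_of_le η₁ inf_le_right
  have hbot : η₁ ⊓ η₀ = (⊥ : Cong (pairAlg B θ)) := by
    rw [inf_comm]; exact ker_fst_inf_ker_snd θ
  rw [hml, hbot, sup_bot_eq] at h2
  exact (inf_le_left : Ψ ⊓ η₀ ≤ Ψ) _ _ h2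

theorem shift_snd {θ : Cong B}
    (hMod : IsModularLattice (Cong (pairAlg B θ)))
    (Ψ : Cong (pairAlg B θ)) {x u y z : B.carrier}
    (hyx : θ.r y x) (hzx : θ.r z x) (hyu : θ.r y u) (hzu : θ.r z u)
    (hΨ : Ψ.r ⟨(y, x), hyx⟩ ⟨(z, x), hzx⟩) :
    Ψ.r ⟨(y, u), hyu⟩ ⟨(z, u), hzu⟩ := by
  haveI := hMod
  set η₀ := (fstProj B θ).ker with hη₀
  set η₁ := (sndProj B θ).ker with hη₁
  have hcd : (Ψ ⊓ η₁).r ⟨(y, x), hyx⟩ ⟨(z, x), hzx⟩ := Cong.inf_r_iff.2 ⟨hΨ, rfl⟩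
  have e1 : ((Ψ ⊓ η₁) ⊔ η₀).r ⟨(y, u), hyu⟩ ⟨(y, x), hyx⟩ :=
    (le_sup_right : η₀ ≤ (Ψ ⊓ η₁) ⊔ η₀) _ _ rfl
  have e2 : ((Ψ ⊓ η₁) ⊔ η₀).r ⟨(y, x), hyx⟩ ⟨(z, x), hzx⟩ :=
    (le_sup_left : Ψ ⊓ η₁ ≤ (Ψ ⊓ η₁) ⊔ η₀) _ _ hcd
  have e3 : ((Ψ ⊓ η₁) ⊔ η₀).r ⟨(z, x), hzx⟩ ⟨(z, u), hzu⟩ :=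
    (le_sup_right : η₀ ≤ (Ψ ⊓ η₁) ⊔ η₀) _ _ rfl
  have h1 : ((Ψ ⊓ η₁) ⊔ η₀).r ⟨(y, u), hyu⟩ ⟨(z, u), hzu⟩ :=
    ((Ψ ⊓ η₁) ⊔ η₀).iseqv.trans (((Ψ ⊓ η₁) ⊔ η₀).iseqv.trans e1 e2) e3
  have h2 : (((Ψ ⊓ η₁) ⊔ η₀) ⊓ η₁).r ⟨(y, u), hyu⟩ ⟨(z, u), hzu⟩ :=
    Cong.inf_r_iff.2 ⟨h1, rfl⟩
  have hml : ((Ψ ⊓ η₁) ⊔ η₀) ⊓ η₁ = (Ψ ⊓ η₁) ⊔ (η₀ ⊓ η₁) :=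
    sup_inf_assoc_of_le η₀ inf_le_right
  have hbot : η₀ ⊓ η₁ = (⊥ : Cong (pairAlg B θ)) := ker_fst_inf_ker_snd θ
  rw [hml, hbot, sup_bot_eq] at h2
  exact (inf_le_left : Ψ ⊓ η₁ ≤ Ψ) _ _ h2

end PairAlg

section Core

variable {B : Algebra S}

/-- The generating relation of `deltaCong`. -/
def dGen (B : Algebra S) (θ ψ : Cong B) :
    (pairAlg B θ).carrier → (pairAlg B θ).carrier → Prop :=
  fun p q => p.1.1 = p.1.2 ∧ q.1.1 = q.1.2 ∧ ψ.r p.1.1 q.1.1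

theorem deltaCong_le_chain (θ ψ : Cong B) :
    deltaCong B θ ψ ≤ chainCong (pairAlg B θ) (dGen B θ ψ) :=
  conGen_le_chain (pairAlg B θ) (dGen B θ ψ)

/-- Transposition of a Mal'cev step: the rows of a translation matrix for
`Δ_{μ,α}` are related by `Δ_{α,μ}`. -/
theorem rows_delta (μ α : Cong B) {n : ℕ} (t : Tm S (Fin n))
    (v v' : Fin n → (pairAlg B μ).carrier)
    (hmv : ∀ l, v l = v' l ∨ dGen B μ α (v l) (v' l))
    (h₁ : α.r (t.eval (pairAlg B μ) v).1.1 (t.eval (pairAlg B μ) v').1.1)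
    (h₂ : α.r (t.eval (pairAlg B μ) v).1.2 (t.eval (pairAlg B μ) v').1.2) :
    (deltaCong B α μ).r
      ⟨((t.eval (pairAlg B μ) v).1.1, (t.eval (pairAlg B μ) v').1.1), h₁⟩
      ⟨((t.eval (pairAlg B μ) v).1.2, (t.eval (pairAlg B μ) v').1.2), h₂⟩ := by
  have memw : ∀ l, α.r (v l).1.1 (v' l).1.1 := fun l => by
    rcases hmv l with hh | ⟨hd1, hd2, hα⟩
    · exact α.r_of_eq (by rw [hh])
    · exact hα
  have memw' : ∀ l, α.r (v l).1.2 (v' l).1.2 := fun l => by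
    rcases hmv l with hh | ⟨hd1, hd2, hα⟩
    · exact α.r_of_eq (by rw [hh])
    · rw [← hd1, ← hd2]; exact hα
  have hrel : ∀ l, (deltaCong B α μ).r
      (⟨((v l).1.1, (v' l).1.1), memw l⟩ : (pairAlg B α).carrier)
      (⟨((v l).1.2, (v' l).1.2), memw' l⟩ : (pairAlg B α).carrier) := fun l => by
    rcases hmv l with hh | ⟨hd1, hd2, hα⟩
    · refine conGen_of ⟨?_, ?_, ?_⟩
      · show (v l).1.1 = (v' l).1.1; rw [hh]
      · show (v l).1.2 = (v' l).1.2; rw [hh]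
      · exact (v l).2
    · exact (deltaCong B α μ).r_of_eq (Subtype.ext (Prod.ext_iff.2 ⟨hd1, hd2⟩))
  have key := Cong.eval_congr (deltaCong B α μ) hrel t
  have ew : t.eval (pairAlg B α) (fun l => ⟨((v l).1.1, (v' l).1.1), memw l⟩)
      = ⟨((t.eval (pairAlg B μ) v).1.1, (t.eval (pairAlg B μ) v').1.1), h₁⟩ := by
    apply Subtype.ext
    apply Prod.ext_iff.2
    exact ⟨(pair_fst_eval α t _).trans (pair_fst_eval μ t v).symm,
      (pair_snd_eval α t _).trans (pair_fst_eval μ t v').symm⟩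
  have ew' : t.eval (pairAlg B α) (fun l => ⟨((v l).1.2, (v' l).1.2), memw' l⟩)
      = ⟨((t.eval (pairAlg B μ) v).1.2, (t.eval (pairAlg B μ) v').1.2), h₂⟩ := by
    apply Subtype.ext
    apply Prod.ext_iff.2
    exact ⟨(pair_fst_eval α t _).trans (pair_snd_eval μ t v).symm,
      (pair_snd_eval α t _).trans (pair_snd_eval μ t v').symm⟩
  rw [ew, ew'] at key
  exact key

/-- Diagonal saturation for `Δ_{α,μ}` on `B(α)`, from the term condition
`C(μ, α; ⊥)`. -/
theorem delta_sat {μ α : Cong B} (h : commutator μ α = ⊥) :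
    ∀ {p q : (pairAlg B α).carrier}, ConChain (pairAlg B α) (dGen B α μ) p q →
      (p.1.1 = p.1.2 ↔ q.1.1 = q.1.2) := by
  intro p q hc
  induction hc with
  | step n t v v' hmv =>
    constructor
    · intro hd
      rw [pair_fst_eval α, pair_snd_eval α] at hd ⊢
      refine cent_multi h t (fun l => (v l).1.1) (fun l => (v l).1.2)
        (fun l => (v' l).1.1) (fun l => (v' l).1.2) ?_ hd
      intro l
      rcases hmv l with hh | ⟨hd1, hd2, hμ⟩
      · exact Or.inr ⟨congrArg (fun z : (pairAlg B α).carrier => z.1.1) hh,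
          congrArg (fun z : (pairAlg B α).carrier => z.1.2) hh, (v l).2⟩
      · exact Or.inl ⟨hd1, hd2, hμ⟩
    · intro hd
      rw [pair_fst_eval α, pair_snd_eval α] at hd ⊢
      refine cent_multi h t (fun l => (v' l).1.1) (fun l => (v' l).1.2)
        (fun l => (v l).1.1) (fun l => (v l).1.2) ?_ hd
      intro l
      rcases hmv l with hh | ⟨hd1, hd2, hμ⟩
      · exact Or.inr ⟨(congrArg (fun z : (pairAlg B α).carrier => z.1.1) hh).symm,
          (congrArg (fun z : (pairAlg B α).carrier => z.1.2) hh).symm, (v' l).2⟩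
      · exact Or.inl ⟨hd2, hd1, μ.iseqv.symm hμ⟩
  | symm _ ih => exact ih.symm
  | trans _ _ ih1 ih2 => exact ih1.trans ih2

theorem delta_sat' {μ α : Cong B} (h : commutator μ α = ⊥)
    {w v₁ v₂ : B.carrier} (hww : α.r w w) (hv : α.r v₁ v₂)
    (hd : (deltaCong B α μ).r ⟨(w, w), hww⟩ ⟨(v₁, v₂), hv⟩) : v₁ = v₂ := by
  have hchain := deltaCong_le_chain α μ _ _ hd
  exact (delta_sat h hchain).1 rfl

/-- The main saturation lemma: the diagonal of `B(μ)` is saturated for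
`Δ_{μ,α}`, given `[μ,α] = ⊥` and modularity. -/
theorem main_sat {μ α : Cong B} (h : commutator μ α = ⊥)
    (hModα : IsModularLattice (Cong (pairAlg B α))) :
    ∀ {p q : (pairAlg B μ).carrier}, ConChain (pairAlg B μ) (dGen B μ α) p q →
      (p.1.1 = p.1.2 ↔ q.1.1 = q.1.2) := by
  intro p q hc
  induction hc with
  | step n t v v' hmv =>
    have memw : ∀ l, α.r (v l).1.1 (v' l).1.1 := fun l => by
      rcases hmv l with hh | ⟨hd1, hd2, hα⟩
      · exact α.r_of_eq (by rw [hh])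
      · exact hα
    have memw' : ∀ l, α.r (v l).1.2 (v' l).1.2 := fun l => by
      rcases hmv l with hh | ⟨hd1, hd2, hα⟩
      · exact α.r_of_eq (by rw [hh])
      · rw [← hd1, ← hd2]; exact hα
    have h₁ : α.r (t.eval (pairAlg B μ) v).1.1 (t.eval (pairAlg B μ) v').1.1 := by
      rw [pair_fst_eval μ, pair_fst_eval μ]
      exact Cong.eval_congr α memw t
    have h₂ : α.r (t.eval (pairAlg B μ) v).1.2 (t.eval (pairAlg B μ) v').1.2 := by
      rw [pair_snd_eval μ, pair_snd_eval μ]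
      exact Cong.eval_congr α memw' t
    have hΔ := rows_delta μ α t v v' hmv h₁ h₂
    constructor
    · intro hP
      have hx : α.r (t.eval (pairAlg B μ) v).1.1 (t.eval (pairAlg B μ) v').1.2 := by
        rw [hP]; exact h₂
      have hcast : (⟨((t.eval (pairAlg B μ) v).1.2, (t.eval (pairAlg B μ) v').1.2), h₂⟩ :
          (pairAlg B α).carrier)
          = ⟨((t.eval (pairAlg B μ) v).1.1, (t.eval (pairAlg B μ) v').1.2), hx⟩ :=
        Subtype.ext (Prod.ext_iff.2 ⟨hP.symm, rfl⟩)
      rw [hcast] at hΔ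
      have huy : α.r (t.eval (pairAlg B μ) v').1.1 (t.eval (pairAlg B μ) v').1.1 :=
        α.iseqv.refl _
      have huz : α.r (t.eval (pairAlg B μ) v').1.1 (t.eval (pairAlg B μ) v').1.2 :=
        α.iseqv.trans (α.iseqv.symm h₁) hx
      have h5 := shift_fst hModα (deltaCong B α μ) h₁ hx huy huz hΔ
      exact delta_sat' h huy huz h5
    · intro hQ
      have hx : α.r (t.eval (pairAlg B μ) v).1.2 (t.eval (pairAlg B μ) v').1.1 := by
        rw [← hQ] at h₂; exact h₂
      have hcast : (⟨((t.eval (pairAlg B μ) v).1.2, (t.eval (pairAlg B μ) v').1.2), h₂⟩ :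
          (pairAlg B α).carrier)
          = ⟨((t.eval (pairAlg B μ) v).1.2, (t.eval (pairAlg B μ) v').1.1), hx⟩ :=
        Subtype.ext (Prod.ext_iff.2 ⟨rfl, hQ.symm⟩)
      rw [hcast] at hΔ
      have hyu : α.r (t.eval (pairAlg B μ) v).1.1 (t.eval (pairAlg B μ) v).1.1 :=
        α.iseqv.refl _
      have hzu : α.r (t.eval (pairAlg B μ) v).1.2 (t.eval (pairAlg B μ) v).1.1 :=
        α.iseqv.trans hx (α.iseqv.symm h₁)
      have h5 := shift_snd hModα (deltaCong B α μ) h₁ hx hyu hzu hΔ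
      exact (delta_sat' h hyu hzu h5).symm
  | symm _ ih => exact ih.symm
  | trans _ _ ih1 ih2 => exact ih1.trans ih2

end Core
/-- In a congruence-modular variety `V`, if `[μ, α] = ⊥`, then
`α` laxly centralizes `μ`; specifically, `C = B(μ)`, the second projection
`π`, `β = ker π_μ` and `γ = Δ_{μ,α}` witness this: `→π β = μ`, `→π γ = α`,
and `β ∧ γ = ⊥`. -/
theorem laxCentralizes_of_commutator_eq_bot {V : Algebra S → Prop}
    (hV : IsVariety V)
    (hmod : ∀ A : Algebra S, V A → IsModularLattice (Cong A))
    {B : Algebra S} (hB : V B) (μ α : Cong B)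
    (h : commutator μ α = ⊥) :
    LaxCentralizes V B μ α ∧
    Function.Surjective (sndProj B μ).toFun ∧
    conMap (sndProj B μ) (fstProj B μ).ker = μ ∧
    conMap (sndProj B μ) (deltaCong B μ α) = α ∧
    (fstProj B μ).ker ⊓ deltaCong B μ α = ⊥ := by
  have hVμ : V (pairAlg B μ) := V_pairAlg hV hB μ
  have hVα : V (pairAlg B α) := V_pairAlg hV hB α
  have hModα : IsModularLattice (Cong (pairAlg B α)) := hmod _ hVα
  have hModμ : IsModularLattice (Cong (pairAlg B μ)) := hmod _ hVμ
  have hsurj : Function.Surjective (sndProj B μ).toFun := fun b =>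
    ⟨⟨(b, b), μ.iseqv.refl b⟩, rfl⟩
  have hker : conMap (sndProj B μ) (fstProj B μ).ker = μ := by
    apply le_antisymm
    · apply conGen_le
      rintro x y ⟨p, p', hpp', rfl, rfl⟩
      have h2 : μ.r p.1.1 p'.1.2 := by
        rw [show p.1.1 = p'.1.1 from hpp']; exact p'.2
      exact μ.iseqv.trans (μ.iseqv.symm p.2) h2
    · intro x y hxy
      exact conGen_of ⟨⟨(x, x), μ.iseqv.refl x⟩, ⟨(x, y), hxy⟩, rfl, rfl, rfl⟩
  have hdelta : conMap (sndProj B μ) (deltaCong B μ α) = α := by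
    apply le_antisymm
    · apply conGen_le
      rintro x y ⟨p, p', hpp', rfl, rfl⟩
      have hle : deltaCong B μ α ≤ conComap (sndProj B μ) α := by
        apply conGen_le
        rintro p q ⟨hd1, hd2, hα⟩
        show α.r p.1.2 q.1.2
        rw [← hd1, ← hd2]; exact hα
      exact hle p p' hpp'
    · intro x y hxy
      refine conGen_of ⟨⟨(x, x), μ.iseqv.refl x⟩, ⟨(y, y), μ.iseqv.refl y⟩, ?_, rfl, rfl⟩
      exact conGen_of ⟨rfl, rfl, hxy⟩
  have hcore : (fstProj B μ).ker ⊓ deltaCong B μ α = ⊥ := by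
    apply le_antisymm _ bot_le
    intro p q hpq
    obtain ⟨h0, hΔ⟩ := Cong.inf_r_iff.1 hpq
    have h0' : p.1.1 = q.1.1 := h0
    have hmem : μ.r p.1.1 q.1.2 := by rw [h0']; exact q.2
    have hq : q = ⟨(p.1.1, q.1.2), hmem⟩ :=
      Subtype.ext (Prod.ext_iff.2 ⟨h0'.symm, rfl⟩)
    rw [hq] at hΔ
    have hu1 : μ.r p.1.2 p.1.2 := μ.iseqv.refl _
    have hu2 : μ.r p.1.2 q.1.2 := μ.iseqv.trans (μ.iseqv.symm p.2) hmem
    have h1 := shift_fst hModμ (deltaCong B μ α) p.2 hmem hu1 hu2 hΔ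
    have h2 := main_sat h hModα (conGen_le_chain (pairAlg B μ) (dGen B μ α) _ _ h1)
    have h3 : p.1.2 = q.1.2 := h2.1 rfl
    exact (⊥ : Cong (pairAlg B μ)).r_of_eq (Subtype.ext (Prod.ext_iff.2 ⟨h0', h3⟩))
  exact ⟨⟨pairAlg B μ, hVμ, sndProj B μ, (fstProj B μ).ker, deltaCong B μ α,
      hsurj, le_of_eq hker.symm, le_of_eq hdelta.symm, hcore⟩,
    hsurj, hker, hdelta, hcore⟩

end UAlg
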